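/- For every odd k ≥ 1, the discrepancy of the Sylvester–Hadamard matrix H_k satisfies √(2^k) ≤ disc(H_k) ≤ √2 · √(2^k) = 2^{(k+1)/2}, the upper bound being witnessed by the sign vector x♮_(k). -/

import Mathlib

open scoped Matrix

/-- Canonical identification `Fin 2ᵏ ⊕ Fin 2ᵏ ≃ Fin 2ᵏ⁺¹` (first summand = first half). -/
def sumEquiv (k : ℕ) : Fin (2 ^ k) ⊕ Fin (2 ^ k) ≃ Fin (2 ^ (k + 1)) :=
  finSumFinEquiv.trans (finCongr (by rw [pow_succ]; ring))

/-- The Sylvester–Hadamard matrices: `H 0 = (1)` and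
`H (k+1) = [[H k, H k], [H k, −H k]]` (a `2ᵏ × 2ᵏ` matrix with `±1` entries). -/
def sylvesterHadamard : (k : ℕ) → Matrix (Fin (2 ^ k)) (Fin (2 ^ k)) ℝ
  | 0 => fun _ _ => 1
  | k + 1 =>
    Matrix.reindex (sumEquiv k) (sumEquiv k)
      (Matrix.fromBlocks (sylvesterHadamard k) (sylvesterHadamard k)
        (sylvesterHadamard k) (-(sylvesterHadamard k)))

/-- Canonical identification `Fin 2² × Fin 2ᵏ ≃ Fin 2ᵏ⁺²` (first factor most
significant), under which `H (k+2) = H 2 ⊗ H k` as a Kronecker product. -/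
def prodEquiv (k : ℕ) : Fin (2 ^ 2) × Fin (2 ^ k) ≃ Fin (2 ^ (k + 2)) :=
  finProdFinEquiv.trans (finCongr (by rw [← pow_add, Nat.add_comm]))

/-- The vector `y = (1, 1, 1, −1)`. -/
def ySign : Fin (2 ^ 2) → ℝ := ![1, 1, 1, -1]

/-- The sign vectors `x♮`: `x♮ 0 = (1)`, `x♮ 1 = (1, 1)` and `x♮ (k+2) = y ⊗ x♮ k`
(Kronecker product of vectors, via the canonical identification `prodEquiv`). -/
def xNat : (k : ℕ) → (Fin (2 ^ k) → ℝ)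
  | 0 => fun _ => 1
  | 1 => fun _ => 1
  | k + 2 => fun i =>
      ySign ((prodEquiv k).symm i).1 * xNat k ((prodEquiv k).symm i).2

/-- `x` is a sign vector: all its entries are `±1`. -/
def IsSignVec {n : ℕ} (x : Fin n → ℝ) : Prop := ∀ i, x i = 1 ∨ x i = -1

/-! ### Auxiliary lemmas -/

lemma SH.HtH : ∀ k, (sylvesterHadamard k)ᵀ * sylvesterHadamard k = (2^k : ℝ) • 1
  | 0 => by
    ext i j
    have : i = j := Fin.ext (by omega)
    subst this
    rw [Matrix.mul_apply]
    simp [sylvesterHadamard, Matrix.mul_apply, Matrix.one_apply]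
    rfl
  | k + 1 => by
    have ih := SH.HtH k
    have key : (Matrix.fromBlocks (sylvesterHadamard k) (sylvesterHadamard k)
          (sylvesterHadamard k) (-(sylvesterHadamard k)))ᵀ *
        (Matrix.fromBlocks (sylvesterHadamard k) (sylvesterHadamard k)
          (sylvesterHadamard k) (-(sylvesterHadamard k))) = ((2:ℝ)^(k+1)) • 1 := by
      rw [Matrix.fromBlocks_transpose, Matrix.fromBlocks_multiply, Matrix.transpose_neg]
      simp only [Matrix.mul_neg, Matrix.neg_mul, neg_neg, ih, add_neg_cancel]
      rw [← two_smul ℝ ((2:ℝ)^k • (1 : Matrix (Fin (2^k)) (Fin (2^k)) ℝ)), smul_smul]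
      rw [show (2:ℝ) * 2^k = 2^(k+1) by ring]
      rw [show (0 : Matrix (Fin (2^k)) (Fin (2^k)) ℝ) = (2^(k+1):ℝ) • 0 by simp,
        ← Matrix.fromBlocks_smul, Matrix.fromBlocks_one]
    simp only [sylvesterHadamard, Matrix.reindex_apply, Matrix.transpose_submatrix,
      Matrix.submatrix_mul_equiv, key, Matrix.submatrix_smul, Pi.smul_apply,
      Matrix.submatrix_one_equiv]

lemma SH.mulVec_succ (k : ℕ) (w : Fin (2^(k+1)) → ℝ) (s : Fin (2^k) ⊕ Fin (2^k)) :
    (sylvesterHadamard (k+1) *ᵥ w) (sumEquiv k s) =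
    Sum.elim
      (sylvesterHadamard k *ᵥ (w ∘ sumEquiv k ∘ Sum.inl) +
        sylvesterHadamard k *ᵥ (w ∘ sumEquiv k ∘ Sum.inr))
      (sylvesterHadamard k *ᵥ (w ∘ sumEquiv k ∘ Sum.inl) -
        sylvesterHadamard k *ᵥ (w ∘ sumEquiv k ∘ Sum.inr)) s := by
  conv_lhs => rw [sylvesterHadamard]
  rw [Matrix.reindex_apply, Matrix.submatrix_mulVec_equiv]
  simp only [Function.comp_apply, Equiv.symm_symm, Equiv.symm_apply_apply,
    Matrix.fromBlocks_mulVec, Matrix.neg_mulVec]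
  cases s <;> simp [Function.comp_def, sub_eq_add_neg]

lemma SH.idx00 (k : ℕ) (i : Fin (2^k)) :
    sumEquiv (k+1) (Sum.inl (sumEquiv k (Sum.inl i))) = prodEquiv k (⟨0, by norm_num⟩, i) :=
  Fin.ext (by show (i : ℕ) = i + 2^k * 0; omega)
lemma SH.idx01 (k : ℕ) (i : Fin (2^k)) :
    sumEquiv (k+1) (Sum.inl (sumEquiv k (Sum.inr i))) = prodEquiv k (⟨1, by norm_num⟩, i) :=
  Fin.ext (by show 2^k + (i:ℕ) = i + 2^k * 1; omega)
lemma SH.idx10 (k : ℕ) (i : Fin (2^k)) :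
    sumEquiv (k+1) (Sum.inr (sumEquiv k (Sum.inl i))) = prodEquiv k (⟨2, by norm_num⟩, i) :=
  Fin.ext (by show 2^(k+1) + (i:ℕ) = i + 2^k * 2; rw [pow_succ]; omega)
lemma SH.idx11 (k : ℕ) (i : Fin (2^k)) :
    sumEquiv (k+1) (Sum.inr (sumEquiv k (Sum.inr i))) = prodEquiv k (⟨3, by norm_num⟩, i) :=
  Fin.ext (by show 2^(k+1) + (2^k + (i:ℕ)) = i + 2^k * 3; rw [pow_succ]; omega)

lemma SH.xNat_apply (k : ℕ) (a : Fin (2^2)) (i : Fin (2^k)) :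
    xNat (k+2) (prodEquiv k (a, i)) = ySign a * xNat k i := by
  rw [xNat]; simp only [Equiv.symm_apply_apply]

lemma SH.xNat_inl_inl (k : ℕ) (i : Fin (2^k)) :
    xNat (k+2) (sumEquiv (k+1) (Sum.inl (sumEquiv k (Sum.inl i)))) = xNat k i := by
  rw [SH.idx00, SH.xNat_apply]; show (1:ℝ) * _ = _; rw [one_mul]
lemma SH.xNat_inl_inr (k : ℕ) (i : Fin (2^k)) :
    xNat (k+2) (sumEquiv (k+1) (Sum.inl (sumEquiv k (Sum.inr i)))) = xNat k i := by
  rw [SH.idx01, SH.xNat_apply]; show (1:ℝ) * _ = _; rw [one_mul]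
lemma SH.xNat_inr_inl (k : ℕ) (i : Fin (2^k)) :
    xNat (k+2) (sumEquiv (k+1) (Sum.inr (sumEquiv k (Sum.inl i)))) = xNat k i := by
  rw [SH.idx10, SH.xNat_apply]; show (1:ℝ) * _ = _; rw [one_mul]
lemma SH.xNat_inr_inr (k : ℕ) (i : Fin (2^k)) :
    xNat (k+2) (sumEquiv (k+1) (Sum.inr (sumEquiv k (Sum.inr i)))) = -xNat k i := by
  rw [SH.idx11, SH.xNat_apply]; show (-1:ℝ) * _ = _; rw [neg_one_mul]

lemma SH.step_abs (k : ℕ) (i : Fin (2^(k+2))) :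
    ∃ j : Fin (2^k), |(sylvesterHadamard (k+2) *ᵥ xNat (k+2)) i| =
      2 * |(sylvesterHadamard k *ᵥ xNat k) j| := by
  have hu1 : (xNat (k+2) ∘ ⇑(sumEquiv (k+1)) ∘ Sum.inl) ∘ ⇑(sumEquiv k) ∘ Sum.inl = xNat k :=
    funext fun j => SH.xNat_inl_inl k j
  have hu2 : (xNat (k+2) ∘ ⇑(sumEquiv (k+1)) ∘ Sum.inl) ∘ ⇑(sumEquiv k) ∘ Sum.inr = xNat k :=
    funext fun j => SH.xNat_inl_inr k j
  have hv1 : (xNat (k+2) ∘ ⇑(sumEquiv (k+1)) ∘ Sum.inr) ∘ ⇑(sumEquiv k) ∘ Sum.inl = xNat k :=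
    funext fun j => SH.xNat_inr_inl k j
  have hv2 : (xNat (k+2) ∘ ⇑(sumEquiv (k+1)) ∘ Sum.inr) ∘ ⇑(sumEquiv k) ∘ Sum.inr = -xNat k :=
    funext fun j => SH.xNat_inr_inr k j
  obtain ⟨s, rfl⟩ := (sumEquiv (k+1)).surjective i
  rw [SH.mulVec_succ]
  rcases s with t | t <;> obtain ⟨t, rfl⟩ := (sumEquiv k).surjective t <;>
    refine ⟨Sum.elim id id t, ?_⟩ <;>
    simp only [Sum.elim_inl, Sum.elim_inr, Pi.add_apply, Pi.sub_apply, SH.mulVec_succ,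
      hu1, hu2, hv1, hv2, Matrix.mulVec_neg, Pi.neg_apply] <;>
    rcases t with j | j <;>
    simp only [Sum.elim_inl, Sum.elim_inr, Pi.add_apply, Pi.sub_apply, Pi.neg_apply, id] <;>
    generalize (sylvesterHadamard k *ᵥ xNat k) j = a <;>
    (first
      | rw [show a + a + (a + -a) = 2*a from by ring]
      | rw [show a - a + (a - -a) = 2*a from by ring]
      | rw [show a + a - (a + -a) = 2*a from by ring]
      | rw [show a - a - (a - -a) = -(2*a) from by ring, abs_neg]) <;>
    rw [abs_mul, abs_two]

lemma SH.entries : ∀ k (i j : Fin (2^k)),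
    sylvesterHadamard k i j = 1 ∨ sylvesterHadamard k i j = -1
  | 0, _, _ => Or.inl rfl
  | k+1, i, j => by
    obtain ⟨s, rfl⟩ := (sumEquiv k).surjective i
    obtain ⟨t, rfl⟩ := (sumEquiv k).surjective j
    simp only [sylvesterHadamard, Matrix.reindex_apply, Matrix.submatrix_apply,
      Equiv.symm_apply_apply]
    rcases s with s | s <;> rcases t with t | t <;>
      simp only [Matrix.fromBlocks_apply₁₁, Matrix.fromBlocks_apply₁₂,
        Matrix.fromBlocks_apply₂₁, Matrix.fromBlocks_apply₂₂, Matrix.neg_apply]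
    · exact SH.entries k s t
    · exact SH.entries k s t
    · exact SH.entries k s t
    · rcases SH.entries k s t with h | h <;> simp [h]

lemma SH.ySign_pm : ∀ a : Fin (2^2), ySign a = 1 ∨ ySign a = -1 := by
  intro a; fin_cases a <;> norm_num [ySign]

lemma SH.xNat_sign : ∀ k, ∀ i, xNat k i = 1 ∨ xNat k i = -1
  | 0 => fun i => by simp [xNat]
  | 1 => fun i => by simp [xNat]
  | k+2 => fun i => by
    rw [xNat]; simp only []
    rcases SH.ySign_pm ((prodEquiv k).symm i).1 with h | h <;>
      rcases SH.xNat_sign k ((prodEquiv k).symm i).2 with h' | h' <;>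
      simp only [h, h'] <;> norm_num

lemma SH.base_bound (i : Fin (2^1)) : |(sylvesterHadamard 1 *ᵥ xNat 1) i| ≤ 2 := by
  have hx : (sylvesterHadamard 1 *ᵥ xNat 1) i = ∑ j, sylvesterHadamard 1 i j := by
    simp [Matrix.mulVec, dotProduct, xNat]
  rw [hx]
  calc |∑ j, sylvesterHadamard 1 i j| ≤ ∑ j, |sylvesterHadamard 1 i j| :=
        Finset.abs_sum_le_sum_abs _ _
    _ ≤ ∑ _j : Fin (2^1), 1 := Finset.sum_le_sum (fun j _ => by
        rcases SH.entries 1 i j with h | h <;> rw [h] <;> norm_num)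
    _ = 2 := by simp

lemma SH.upper : ∀ m : ℕ, ∀ i : Fin (2^(2*m+1)),
    |(sylvesterHadamard (2*m+1) *ᵥ xNat (2*m+1)) i| ≤ 2^(m+1)
  | 0, i => by simpa using SH.base_bound i
  | m+1, i => by
    show |(sylvesterHadamard ((2*m+1)+2) *ᵥ xNat ((2*m+1)+2)) i| ≤ 2^(m+1+1)
    obtain ⟨j, hj⟩ := SH.step_abs (2*m+1) i
    rw [hj, show (2:ℝ)^(m+1+1) = 2 * 2^(m+1) from by ring]
    exact mul_le_mul_of_nonneg_left (SH.upper m j) (by norm_num)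

lemma SH.lower (k : ℕ) (x : Fin (2^k) → ℝ) (hx : ∀ i, x i = 1 ∨ x i = -1) :
    Real.sqrt (2^k) ≤ ‖sylvesterHadamard k *ᵥ x‖ := by
  set b := sylvesterHadamard k *ᵥ x with hb
  have hxx : x ⬝ᵥ x = (2^k : ℝ) := by
    have h1 : ∀ i, x i * x i = 1 := fun i => by rcases hx i with h | h <;> rw [h] <;> norm_num
    unfold dotProduct
    simp only [h1, Finset.sum_const, Finset.card_univ, Fintype.card_fin, nsmul_eq_mul,
      mul_one]
    push_cast
    ring
  have h1 : b ⬝ᵥ b = (2^k : ℝ) * 2^k := by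
    rw [hb, Matrix.dotProduct_mulVec, ← Matrix.mulVec_transpose, Matrix.mulVec_mulVec,
      SH.HtH, Matrix.smul_mulVec, Matrix.one_mulVec, smul_dotProduct, hxx,
      smul_eq_mul]
  have h2 : ∀ i, b i * b i ≤ ‖b‖ * ‖b‖ := fun i => by
    have h := norm_le_pi_norm b i
    rw [Real.norm_eq_abs] at h
    calc b i * b i = |b i| * |b i| := (abs_mul_abs_self _).symm
      _ ≤ ‖b‖ * ‖b‖ := mul_le_mul h h (abs_nonneg _) (norm_nonneg _)
  have h3 : (2^k : ℝ) * 2^k ≤ 2^k * (‖b‖ * ‖b‖) := by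
    rw [← h1]
    calc b ⬝ᵥ b = ∑ i, b i * b i := rfl
      _ ≤ (Finset.univ.card : ℕ) • (‖b‖ * ‖b‖) :=
          Finset.sum_le_card_nsmul _ _ _ (fun i _ => h2 i)
      _ = (2^k : ℝ) * (‖b‖ * ‖b‖) := by
          rw [Finset.card_univ, Fintype.card_fin, nsmul_eq_mul]
          push_cast
          ring
  have h4 : (2^k : ℝ) ≤ ‖b‖ * ‖b‖ :=
    le_of_mul_le_mul_left h3 (by positivity)
  calc Real.sqrt (2^k) ≤ Real.sqrt (‖b‖ * ‖b‖) := Real.sqrt_le_sqrt h4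
    _ = ‖b‖ := Real.sqrt_mul_self (norm_nonneg b)

lemma SH.sqrt_eq (m : ℕ) : Real.sqrt 2 * Real.sqrt (2^(2*m+1)) = 2^(m+1) := by
  rw [← Real.sqrt_mul (by norm_num : (0:ℝ) ≤ 2),
    show (2:ℝ) * 2^(2*m+1) = (2^(m+1))^2 from by ring,
    Real.sqrt_sq (by positivity)]

/-- For every odd `k ≥ 1` the discrepancy of the Sylvester–Hadamard matrix `H k`
satisfies `√(2ᵏ) ≤ disc(H k) ≤ √2·√(2ᵏ) = 2^{(k+1)/2}`: every sign vector
`x ∈ {±1}^{2ᵏ}` has `‖H k · x‖_∞ ≥ √(2ᵏ)`, and the sign vector `x♮ k` witnesses the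
upper bound `‖H k · x♮ k‖_∞ ≤ √2·√(2ᵏ)`.  (The norm on `Fin n → ℝ` is the sup
norm.) -/
theorem sylvesterHadamard_discrepancy_odd (k : ℕ) (hk : Odd k) :
    (∀ x : Fin (2 ^ k) → ℝ, IsSignVec x →
      Real.sqrt (2 ^ k) ≤ ‖(sylvesterHadamard k).mulVec x‖) ∧
    IsSignVec (xNat k) ∧
    ‖(sylvesterHadamard k).mulVec (xNat k)‖ ≤ Real.sqrt 2 * Real.sqrt (2 ^ k) ∧
    Real.sqrt 2 * Real.sqrt (2 ^ k) = 2 ^ ((k + 1) / 2) := by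
  obtain ⟨m, rfl⟩ := hk
  refine ⟨fun x hx => SH.lower _ x hx, SH.xNat_sign _, ?_, ?_⟩
  · rw [SH.sqrt_eq]
    refine (pi_norm_le_iff_of_nonneg (by positivity)).2 fun i => ?_
    rw [Real.norm_eq_abs]
    exact SH.upper m i
  · rw [SH.sqrt_eq]
    norm_num
    omega
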